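/- Let B ⊆ ℝⁿ be a nonempty finite set, let m be the counting measure on B, and let T : ℝⁿ → ℝ^M be a polynomial map with components T₁,…,T_M such that 0 lies in the convex hull of T(B). For an integer k ≥ 0 let Q_k = {λ ∈ ℝ^M : for every real polynomial a in n variables of total degree at most k, ∑_{x∈B} (1 + ∑ᵢ λᵢTᵢ(x))·a(x)² ≥ 0}, and let Q_k° = {y ∈ ℝ^M : ⟨λ, y⟩ ≥ −1 for all λ ∈ Q_k}. Then there exists an integer k such that the convex hull of T(B) equals Q_k°. -/

import Mathlib

open MvPolynomial

/-- The polar of a subset `S ⊆ ℝ^M`: all `y` with `⟨s, y⟩ ≥ −1` for every `s ∈ S`. -/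
def polarSet {M : ℕ} (S : Set (Fin M → ℝ)) : Set (Fin M → ℝ) :=
  {y | ∀ l ∈ S, -1 ≤ ∑ i, l i * y i}

lemma clm_eq_sum {M : ℕ} (f : (Fin M → ℝ) →L[ℝ] ℝ) (z : Fin M → ℝ) :
    f z = ∑ i, f (Pi.single i 1) * z i := by
  have hz : z = ∑ i, z i • (Pi.single i (1:ℝ) : Fin M → ℝ) := by
    funext j
    simp [Finset.sum_apply, Pi.single_apply, Finset.sum_ite_eq']
  conv_lhs => rw [hz]
  rw [map_sum]
  simp [mul_comm]

lemma bipolar {M : ℕ} (S : Set (Fin M → ℝ)) (hS : S.Finite)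
    (h0 : (0 : Fin M → ℝ) ∈ convexHull ℝ S) :
    convexHull ℝ S = polarSet (polarSet S) := by
  apply le_antisymm
  · apply convexHull_min
    · intro s hs l hl
      simpa [mul_comm] using hl s hs
    · intro y hy z hz a b ha hb hab l hl
      have h1 := hy l hl
      have h2 := hz l hl
      have : ∑ i, l i * (a • y + b • z) i = a * (∑ i, l i * y i) + b * (∑ i, l i * z i) := by
        simp [Finset.mul_sum, Finset.sum_add_distrib, mul_add]
        congr 1 <;> (apply Finset.sum_congr rfl; intro i _; ring)
      rw [this]
      calc (-1 : ℝ) = a * (-1) + b * (-1) := by linarith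
        _ ≤ a * (∑ i, l i * y i) + b * (∑ i, l i * z i) := by
            gcongr <;> assumption
  · intro y hy
    by_contra hyc
    obtain ⟨f, u, hfa, hfy⟩ := geometric_hahn_banach_closed_point
      (convex_convexHull ℝ S) ((hS.isCompact_convexHull (𝕜 := ℝ)).isClosed) hyc
    have hu : 0 < u := by simpa using hfa 0 h0
    set l : Fin M → ℝ := fun i => -(f (Pi.single i 1)) / u with hl
    have key : ∀ z : Fin M → ℝ, ∑ i, z i * l i = -(f z) / u := by
      intro z
      simp only [hl]
      rw [clm_eq_sum f z, ← Finset.sum_neg_distrib, Finset.sum_div]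
      exact Finset.sum_congr rfl fun i _ => by ring
    have hlmem : l ∈ polarSet S := by
      intro s hs
      have := hfa s (subset_convexHull ℝ S hs)
      rw [key s, neg_div, neg_le, neg_neg]
      rw [div_le_one hu]
      exact this.le
    have := hy l hlmem
    rw [show ∑ i, l i * y i = ∑ i, y i * l i from by simp [mul_comm], key y] at this
    rw [neg_div, le_neg] at this
    have : f y / u ≤ 1 := by linarith
    rw [div_le_one hu] at this
    linarith

lemma interp_exists {n : ℕ} (F : Finset (Fin n → ℝ)) (x₀ : Fin n → ℝ) :
    ∃ p : MvPolynomial (Fin n) ℝ, p.totalDegree ≤ F.card ∧ eval x₀ p = 1 ∧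
      ∀ y ∈ F, y ≠ x₀ → eval y p = 0 := by
  classical
  have hi : ∀ y : {y // y ∈ F.erase x₀}, ∃ i, x₀ i ≠ (y : Fin n → ℝ) i := by
    intro y
    exact Function.ne_iff.mp (Ne.symm (Finset.ne_of_mem_erase y.2))
  choose idx hidx using hi
  refine ⟨∏ y ∈ (F.erase x₀).attach,
    C ((x₀ (idx y) - (y : Fin n → ℝ) (idx y))⁻¹) * (X (idx y) - C ((y : Fin n → ℝ) (idx y))),
    ?_, ?_, ?_⟩
  · refine le_trans (totalDegree_finset_prod _ _) ?_
    refine le_trans (Finset.sum_le_card_nsmul _ _ 1 ?_) ?_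
    · intro y _
      refine le_trans (totalDegree_mul _ _) ?_
      rw [totalDegree_C, zero_add]
      refine le_trans (totalDegree_sub _ _) ?_
      simp [totalDegree_X]
    · simp only [smul_eq_mul, mul_one, Finset.card_attach]
      exact le_trans (Finset.card_erase_le) (le_refl _)
  · rw [map_prod]
    apply Finset.prod_eq_one
    intro y _
    rw [map_mul, eval_C, map_sub, eval_X, eval_C]
    exact inv_mul_cancel₀ (sub_ne_zero_of_ne (hidx y))
  · intro y hy hne
    have hmem : y ∈ F.erase x₀ := Finset.mem_erase.mpr ⟨hne, hy⟩
    rw [map_prod]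
    apply Finset.prod_eq_zero (Finset.mem_attach _ ⟨y, hmem⟩)
    rw [map_mul, map_sub, eval_X, eval_C]
    simp

theorem finite_convergence_of_relaxation {n M : ℕ}
    (B : Set (Fin n → ℝ)) (hBne : B.Nonempty) (hB : B.Finite)
    (T : Fin M → MvPolynomial (Fin n) ℝ)
    (h0 : (0 : Fin M → ℝ) ∈ convexHull ℝ ((fun x i => eval x (T i)) '' B)) :
    ∃ k : ℕ, convexHull ℝ ((fun (x : Fin n → ℝ) (i : Fin M) => eval x (T i)) '' B) =
      polarSet {l : Fin M → ℝ | ∀ a : MvPolynomial (Fin n) ℝ, a.totalDegree ≤ k →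
        0 ≤ ∑ x ∈ hB.toFinset, (1 + ∑ i, l i * eval x (T i)) * (eval x a) ^ 2} := by
  classical
  refine ⟨hB.toFinset.card, ?_⟩
  set S : Set (Fin M → ℝ) := (fun x i => eval x (T i)) '' B with hSdef
  have hSfin : S.Finite := hB.image _
  have hQ : {l : Fin M → ℝ | ∀ a : MvPolynomial (Fin n) ℝ,
      a.totalDegree ≤ hB.toFinset.card →
      0 ≤ ∑ x ∈ hB.toFinset, (1 + ∑ i, l i * eval x (T i)) * (eval x a) ^ 2}
      = polarSet S := by
    ext l
    constructor
    · rintro hl s ⟨x₀, hx₀B, rfl⟩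
      obtain ⟨p, hdeg, h1, hz⟩ := interp_exists hB.toFinset x₀
      have hmem : x₀ ∈ hB.toFinset := hB.mem_toFinset.mpr hx₀B
      have key := hl p hdeg
      rw [Finset.sum_eq_single_of_mem x₀ hmem (fun y hy hne => by
        rw [hz y hy hne]; ring)] at key
      rw [h1] at key
      have : 0 ≤ 1 + ∑ i, l i * eval x₀ (T i) := by
        simpa using key
      have heq : ∑ i, (fun i => eval x₀ (T i)) i * l i = ∑ i, l i * eval x₀ (T i) :=
        Finset.sum_congr rfl fun i _ => mul_comm _ _
      rw [heq]
      linarith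
    · intro hl a _
      apply Finset.sum_nonneg
      intro x hx
      apply mul_nonneg _ (sq_nonneg _)
      have hs : (fun i => eval x (T i)) ∈ S := ⟨x, hB.mem_toFinset.mp hx, rfl⟩
      have := hl _ hs
      have heq : ∑ i, (fun i => eval x (T i)) i * l i = ∑ i, l i * eval x (T i) :=
        Finset.sum_congr rfl fun i _ => mul_comm _ _
      rw [heq] at this
      linarith
  rw [hQ]
  exact bipolar S hSfin h0
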